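/- arXiv:math-ph/0512034 — 2 statements merged into one kernel-verified Lean document; each statement's English description precedes it below -/
import Mathlib

section
/- Let W : ℝⁿ → ℝ (n ≥ 2) be a Schwartz function such that ∫_ℝ W(x + tω) dt = 0 for all x ∈ ℝⁿ and all unit vectors ω. Then W = 0. (Injectivity of the X-ray transform on Schwartz functions.) -/
open MeasureTheory FourierTransform Real Module
open scoped RealInnerProductSpace

/-- Injectivity of the X-ray transform on Schwartz functions: if all line
integrals of a Schwartz function `W` on `ℝⁿ`, `n ≥ 2`, vanish, then `W = 0`. -/
theorem xray_injective (n : ℕ) (hn : 2 ≤ n)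
    (W : SchwartzMap (EuclideanSpace ℝ (Fin n)) ℝ)
    (hW : ∀ ω : EuclideanSpace ℝ (Fin n), ‖ω‖ = 1 →
      ∀ x : EuclideanSpace ℝ (Fin n), (∫ t : ℝ, W (x + t • ω)) = 0) :
    W = 0 := by
  obtain ⟨m, rfl⟩ : ∃ m, n = m + 1 := ⟨n - 1, by omega⟩
  have hf : ∀ x, (fun x => ((W x : ℂ))) x = ((W x : ℝ) : ℂ) := fun _ => rfl
  set f : EuclideanSpace ℝ (Fin (m + 1)) → ℂ := fun x => (W x : ℂ) with hfdef
  have hfi : Integrable f := W.integrable.ofReal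
  have hfc : Continuous f := Complex.continuous_ofReal.comp W.continuous
  have key : 𝓕 f = 0 := by
    ext ξ
    -- find a unit vector orthogonal to ξ
    obtain ⟨ω, hω1, hωξ⟩ : ∃ ω : EuclideanSpace ℝ (Fin (m + 1)), ‖ω‖ = 1 ∧ ⟪ω, ξ⟫ = 0 := by
      have hfin : 0 < finrank ℝ ((ℝ ∙ ξ)ᗮ : Submodule ℝ (EuclideanSpace ℝ (Fin (m + 1)))) := by
        have h1 := Submodule.finrank_add_finrank_orthogonal (K := (ℝ ∙ ξ))
        have h2 : finrank ℝ (ℝ ∙ ξ : Submodule ℝ (EuclideanSpace ℝ (Fin (m + 1)))) ≤ 1 := by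
          by_cases hξ : ξ = 0
          · subst hξ
            rw [Submodule.span_zero_singleton]
            simp
          · rw [finrank_span_singleton hξ]
        have h3 : finrank ℝ (EuclideanSpace ℝ (Fin (m + 1))) = m + 1 := finrank_euclideanSpace_fin
        omega
      obtain ⟨v, hv⟩ := finrank_pos_iff_exists_ne_zero.mp hfin
      have hvE : (v : EuclideanSpace ℝ (Fin (m + 1))) ≠ 0 := fun h => hv (Subtype.ext h)
      refine ⟨‖(v : EuclideanSpace ℝ (Fin (m + 1)))‖⁻¹ • (v : EuclideanSpace ℝ (Fin (m + 1))),
        ?_, ?_⟩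
      · rw [norm_smul, norm_inv, norm_norm, inv_mul_cancel₀ (norm_ne_zero_iff.mpr hvE)]
      · rw [real_inner_smul_left]
        have h0 : ⟪ξ, (v : EuclideanSpace ℝ (Fin (m + 1)))⟫ = 0 :=
          v.2 ξ (Submodule.mem_span_singleton_self ξ)
        rw [real_inner_comm] at h0
        rw [h0, mul_zero]
    have ho : Orthonormal ℝ (Set.restrict {(0 : Fin (m + 1))} fun _ => ω) := by
      constructor
      · intro i; exact hω1
      · intro i j hij
        exact absurd (Subtype.ext (by
          have h1 : (i : Fin (m + 1)) ∈ ({0} : Set (Fin (m + 1))) := i.2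
          have h2 : (j : Fin (m + 1)) ∈ ({0} : Set (Fin (m + 1))) := j.2
          rw [Set.mem_singleton_iff] at h1 h2
          rw [h1, h2])) hij
    obtain ⟨b, hb⟩ := ho.exists_orthonormalBasis_extension_of_card_eq
      (by simp [finrank_euclideanSpace_fin])
    have hbω : b 0 = ω := hb 0 rfl
    have hFc : Continuous fun v : EuclideanSpace ℝ (Fin (m + 1)) => 𝐞 (-⟪v, ξ⟫) • f v := by
      have : Continuous fun v : EuclideanSpace ℝ (Fin (m + 1)) => (𝐞 (-⟪v, ξ⟫) : Circle) :=
        Real.continuous_fourierChar.comp (continuous_id.inner continuous_const).neg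
      exact this.smul hfc
    have hFi : Integrable fun v : EuclideanSpace ℝ (Fin (m + 1)) => 𝐞 (-⟪v, ξ⟫) • f v := by
      refine (integrable_norm_iff hFc.aestronglyMeasurable).1 ?_
      simpa [Circle.norm_smul] using hfi.norm
    set g : (Fin m → ℝ) → EuclideanSpace ℝ (Fin (m + 1)) :=
      fun y => ∑ j, y j • b ((0 : Fin (m + 1)).succAbove j) with hg
    have hcomp : ∀ (t : ℝ) (y : Fin m → ℝ),
        b.repr.symm (((MeasurableEquiv.toLp 2 (Fin (m + 1) → ℝ)).symm).symm
          ((MeasurableEquiv.piFinSuccAbove (fun _ : Fin (m + 1) => ℝ) 0).symm (t, y)))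
          = g y + t • ω := by
      intro t y
      rw [← b.sum_repr_symm, Fin.sum_univ_succAbove _ 0]
      have hc : ∀ i, ((MeasurableEquiv.toLp 2 (Fin (m + 1) → ℝ)).symm).symm
          ((MeasurableEquiv.piFinSuccAbove (fun _ : Fin (m + 1) => ℝ) 0).symm (t, y)) i
          = Fin.insertNth (α := fun _ : Fin (m + 1) => ℝ) 0 t y i := fun i => rfl
      simp only [hc, Fin.insertNth_apply_same, Fin.insertNth_apply_succAbove, hbω, hg]
      exact add_comm _ _
    have inner_int : ∀ y : Fin m → ℝ,
        (∫ t : ℝ, 𝐞 (-⟪g y + t • ω, ξ⟫) • f (g y + t • ω)) = 0 := by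
      intro y
      have hph : ∀ t : ℝ, ⟪g y + t • ω, ξ⟫ = ⟪g y, ξ⟫ := fun t => by
        rw [inner_add_left, real_inner_smul_left, hωξ, mul_zero, add_zero]
      have h2 : (∫ t : ℝ, ((W (g y + t • ω) : ℝ) : ℂ))
          = ((∫ t : ℝ, W (g y + t • ω) : ℝ) : ℂ) := integral_ofReal (𝕜 := ℂ)
      simp_rw [hph, hfdef]
      simp_rw [Circle.smul_def, smul_eq_mul]
      rw [integral_const_mul, h2, hW ω hω1 (g y)]
      simp
    -- chain of measure-preserving changes of variables
    have e1 := b.measurePreserving_repr_symm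
    have e1emb : MeasurableEmbedding b.repr.symm :=
      b.repr.symm.toHomeomorph.measurableEmbedding
    have e2 := (EuclideanSpace.volume_preserving_symm_measurableEquiv_toLp (Fin (m + 1))).symm
    have e3 := (volume_preserving_piFinSuccAbove (fun _ : Fin (m + 1) => ℝ) 0).symm
    calc 𝓕 f ξ = ∫ v, 𝐞 (-⟪v, ξ⟫) • f v := Real.fourier_eq f ξ
      _ = ∫ c : EuclideanSpace ℝ (Fin (m + 1)),
            𝐞 (-⟪b.repr.symm c, ξ⟫) • f (b.repr.symm c) :=
          (e1.integral_comp e1emb _).symm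
      _ = ∫ x : Fin (m + 1) → ℝ,
            𝐞 (-⟪b.repr.symm (((MeasurableEquiv.toLp 2 (Fin (m + 1) → ℝ)).symm).symm x), ξ⟫) •
              f (b.repr.symm (((MeasurableEquiv.toLp 2 (Fin (m + 1) → ℝ)).symm).symm x)) :=
          (e2.integral_comp (MeasurableEquiv.measurableEmbedding _) _).symm
      _ = ∫ p : ℝ × (Fin m → ℝ),
            𝐞 (-⟪b.repr.symm (((MeasurableEquiv.toLp 2 (Fin (m + 1) → ℝ)).symm).symm
                ((MeasurableEquiv.piFinSuccAbove (fun _ : Fin (m + 1) => ℝ) 0).symm p)), ξ⟫) •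
              f (b.repr.symm (((MeasurableEquiv.toLp 2 (Fin (m + 1) → ℝ)).symm).symm
                ((MeasurableEquiv.piFinSuccAbove (fun _ : Fin (m + 1) => ℝ) 0).symm p))) :=
          (e3.integral_comp (MeasurableEquiv.measurableEmbedding _) _).symm
      _ = ∫ p : ℝ × (Fin m → ℝ), 𝐞 (-⟪g p.2 + p.1 • ω, ξ⟫) • f (g p.2 + p.1 • ω) := by
          congr 1
          ext p
          rw [hcomp p.1 p.2]
      _ = ∫ y : Fin m → ℝ, ∫ t : ℝ, 𝐞 (-⟪g y + t • ω, ξ⟫) • f (g y + t • ω) := by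
          rw [Measure.volume_eq_prod]
          refine integral_prod_symm _ ?_
          rw [← Measure.volume_eq_prod]
          have := ((e3.integrable_comp_emb (MeasurableEquiv.measurableEmbedding _)).2
            ((e2.integrable_comp_emb (MeasurableEquiv.measurableEmbedding _)).2
              ((e1.integrable_comp_emb e1emb).2 hFi)))
          refine this.congr (Filter.EventuallyEq.of_eq ?_)
          ext p
          simp only [Function.comp_apply]
          rw [hcomp p.1 p.2]
      _ = 0 := by simp_rw [inner_int]; simp
  have h0 : f = 0 := by
    have hfe := hfc.fourierInv_fourier_eq hfi (by rw [key]; exact integrable_zero _ _ _)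
    rw [key] at hfe
    rw [← hfe]
    ext v
    simp [Real.fourierInv_eq]
  ext x
  have hx : f x = 0 := by rw [h0]; rfl
  rw [hf x] at hx
  exact_mod_cast hx
end

section
/- If two Schwartz functions W₁, W₂ on ℝⁿ (n ≥ 2) have equal X-ray transforms, i.e., ∫_ℝ W₁(x + tω) dt = ∫_ℝ W₂(x + tω) dt for all x ∈ ℝⁿ and all unit vectors ω, then W₁ = W₂. -/
open MeasureTheory

open scoped FourierTransform RealInnerProductSpace

/-- Post-composition of a real-valued Schwartz map with the inclusion `ℝ → ℂ`. -/
noncomputable def SchwartzMap.ofRealC {E : Type*} [NormedAddCommGroup E] [NormedSpace ℝ E]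
    (W : SchwartzMap E ℝ) : SchwartzMap E ℂ where
  toFun x := (W x : ℂ)
  smooth' := Complex.ofRealCLM.contDiff.comp (W.smooth ⊤)
  decay' := by
    intro k n
    obtain ⟨C, hC⟩ := W.decay' k n
    refine ⟨C, fun x => ?_⟩
    have hfun : (fun x => ((W x : ℂ))) = (RCLike.ofRealLI (K := ℂ)) ∘ W := rfl
    rw [hfun, LinearIsometry.norm_iteratedFDeriv_comp_left (x := x) _ (W.smooth ⊤).contDiffAt (mod_cast le_top)]
    exact hC x

@[simp] lemma SchwartzMap.ofRealC_apply {E : Type*} [NormedAddCommGroup E] [NormedSpace ℝ E]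
    (W : SchwartzMap E ℝ) (x : E) : W.ofRealC x = (W x : ℂ) := rfl

lemma integral_coe_complex {α : Type*} [MeasurableSpace α] (μ : MeasureTheory.Measure α)
    (f : α → ℝ) : ∫ x, (f x : ℂ) ∂μ = ((∫ x, f x ∂μ : ℝ) : ℂ) :=
  integral_ofReal

/-- Two Schwartz functions on `ℝⁿ`, `n ≥ 2`, with equal X-ray transforms
coincide. -/
theorem xray_determines_schwartz (n : ℕ) (hn : 2 ≤ n)
    (W₁ W₂ : SchwartzMap (EuclideanSpace ℝ (Fin n)) ℝ)
    (h : ∀ ω : EuclideanSpace ℝ (Fin n), ‖ω‖ = 1 →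
      ∀ x : EuclideanSpace ℝ (Fin n),
        (∫ t : ℝ, W₁ (x + t • ω)) = ∫ t : ℝ, W₂ (x + t • ω)) :
    W₁ = W₂ := by
  obtain ⟨m, rfl⟩ : ∃ m, n = m + 1 := ⟨n - 1, by omega⟩
  -- Fourier transforms agree away from the origin
  have key : ∀ ξ : EuclideanSpace ℝ (Fin (m + 1)), ξ ≠ 0 →
      𝓕 (W₁.ofRealC) ξ = 𝓕 (W₂.ofRealC) ξ := by
    intro ξ hξ
    have hξn : ‖ξ‖ ≠ 0 := norm_ne_zero_iff.2 hξ
    -- an orthonormal basis whose first vector is parallel to ξ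
    have hv : Orthonormal ℝ
        (({0} : Set (Fin (m + 1))).restrict fun _ => (‖ξ‖⁻¹ • ξ : EuclideanSpace ℝ (Fin (m + 1)))) := by
      constructor
      · intro i
        simp [Set.restrict, norm_smul, inv_mul_cancel₀ hξn]
      · intro i j hij
        exact absurd (Subsingleton.elim i j) hij
    obtain ⟨b, hb0⟩ := hv.exists_orthonormalBasis_extension_of_card_eq (by simp)
    have hb0' : b 0 = ‖ξ‖⁻¹ • ξ := hb0 0 rfl
    set i1 : Fin (m + 1) := ⟨1, by omega⟩ with hi1
    have hi10 : i1 ≠ 0 := by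
      simp [hi1, Fin.ext_iff]
    set ω : EuclideanSpace ℝ (Fin (m + 1)) := b i1 with hωdef
    have hω1 : ‖ω‖ = 1 := b.orthonormal.1 i1
    have hωξ : ⟪ω, ξ⟫ = 0 := by
      have hξeq : ξ = ‖ξ‖ • b 0 := by
        rw [hb0', smul_smul, mul_inv_cancel₀ hξn, one_smul]
      rw [hξeq, real_inner_smul_right, b.orthonormal.2 hi10, mul_zero]
    -- the measure preserving splitting of ℝ^(m+1) along ω
    set e₁ : (ℝ × (Fin m → ℝ)) ≃ᵐ (Fin (m + 1) → ℝ) :=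
      (MeasurableEquiv.piFinSuccAbove (fun _ => ℝ) i1).symm with he₁
    set e₂ : (Fin (m + 1) → ℝ) ≃ᵐ EuclideanSpace ℝ (Fin (m + 1)) :=
      MeasurableEquiv.toLp 2 (Fin (m + 1) → ℝ) with he₂
    set e₃ : EuclideanSpace ℝ (Fin (m + 1)) ≃ᵐ EuclideanSpace ℝ (Fin (m + 1)) :=
      b.repr.symm.toHomeomorph.toMeasurableEquiv with he₃
    set e := (e₁.trans e₂).trans e₃ with he_def
    have he : MeasurePreserving e volume volume :=
      (b.measurePreserving_repr_symm).comp
        (((EuclideanSpace.volume_preserving_symm_measurableEquiv_toLp _).symm).comp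
          ((volume_preserving_piFinSuccAbove (fun _ : Fin (m + 1) => ℝ) i1).symm))
    set T : (Fin m → ℝ) → EuclideanSpace ℝ (Fin (m + 1)) :=
      fun y => ∑ j : Fin m, y j • b (i1.succAbove j) with hT
    have he' : ∀ (t : ℝ) (y : Fin m → ℝ), e (t, y) = t • ω + T y := by
      intro t y
      have h1 : e (t, y) = b.repr.symm (e₂ (i1.insertNth t y)) := rfl
      rw [h1, ← OrthonormalBasis.sum_repr_symm]
      have h2 : ∀ j, (e₂ (i1.insertNth t y)) j = (i1.insertNth t y : Fin (m + 1) → ℝ) j := by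
        intro j
        simp [he₂, MeasurableEquiv.coe_toLp]
      simp_rw [h2]
      rw [Fin.sum_univ_succAbove _ i1, Fin.insertNth_apply_same]
      congr 1
      refine Finset.sum_congr rfl fun j _ => ?_
      rw [Fin.insertNth_apply_succAbove]
    -- the iterated-integral formula
    have main : ∀ g : EuclideanSpace ℝ (Fin (m + 1)) → ℂ, Integrable g →
        ∫ x, g x = ∫ y : Fin m → ℝ, ∫ t : ℝ, g (t • ω + T y) := by
      intro g hg
      rw [← he.integral_comp e.measurableEmbedding]
      have hg' : Integrable (fun p : ℝ × (Fin m → ℝ) => g (e p)) :=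
        (he.integrable_comp_emb e.measurableEmbedding).2 hg
      rw [MeasureTheory.Measure.volume_eq_prod] at hg' ⊢
      rw [MeasureTheory.integral_prod_symm _ hg']
      refine integral_congr_ae (Filter.Eventually.of_forall fun y => ?_)
      refine integral_congr_ae (Filter.Eventually.of_forall fun t => ?_)
      exact congrArg g (he' t y)
    have inner_int : ∀ (W : SchwartzMap (EuclideanSpace ℝ (Fin (m + 1))) ℝ) (y : Fin m → ℝ),
        (∫ t : ℝ, 𝐞 (-⟪t • ω + T y, ξ⟫) • ((W (t • ω + T y) : ℂ))) =
          (𝐞 (-⟪T y, ξ⟫) : ℂ) * ((∫ t : ℝ, W (T y + t • ω) : ℝ) : ℂ) := by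
      intro W y
      have hinner : ∀ t : ℝ, ⟪t • ω + T y, ξ⟫ = ⟪T y, ξ⟫ := by
        intro t
        rw [inner_add_left, real_inner_smul_left, hωξ, mul_zero, zero_add]
      simp_rw [hinner, Circle.smul_def, smul_eq_mul]
      rw [MeasureTheory.integral_const_mul, ← integral_coe_complex]
      congr 1
      refine integral_congr_ae (Filter.Eventually.of_forall fun t => ?_)
      exact congrArg (fun z => ((W z : ℝ) : ℂ)) (add_comm (t • ω) (T y))
    have hint : ∀ W : SchwartzMap (EuclideanSpace ℝ (Fin (m + 1))) ℝ,
        Integrable (fun x => 𝐞 (-⟪x, ξ⟫) • (W.ofRealC x)) := fun W =>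
      (Real.fourierIntegral_convergent_iff ξ).2 W.ofRealC.integrable
    rw [SchwartzMap.fourier_coe, SchwartzMap.fourier_coe, Real.fourier_eq, Real.fourier_eq,
      main _ (hint W₁), main _ (hint W₂)]
    refine integral_congr_ae (Filter.Eventually.of_forall fun y => ?_)
    simp only [SchwartzMap.ofRealC_apply]
    rw [inner_int W₁ y, inner_int W₂ y, h ω hω1 (T y)]
  -- conclude by continuity and Fourier inversion
  have keyall : 𝓕 (W₁.ofRealC : EuclideanSpace ℝ (Fin (m + 1)) → ℂ) = 𝓕 (W₂.ofRealC : EuclideanSpace ℝ (Fin (m + 1)) → ℂ) := by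
    have hc1 : Continuous (𝓕 (W₁.ofRealC : EuclideanSpace ℝ (Fin (m + 1)) → ℂ)) :=
      ((SchwartzMap.fourierTransformCLE ℝ _) W₁.ofRealC).continuous
    have hc2 : Continuous (𝓕 (W₂.ofRealC : EuclideanSpace ℝ (Fin (m + 1)) → ℂ)) :=
      ((SchwartzMap.fourierTransformCLE ℝ _) W₂.ofRealC).continuous
    haveI : Nontrivial (EuclideanSpace ℝ (Fin (m + 1))) :=
      ⟨⟨0, EuclideanSpace.single 0 1, by
        intro hh
        have := congrFun (congrArg (fun v : EuclideanSpace ℝ (Fin (m+1)) => (v : Fin (m+1) → ℝ)) hh) 0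
        simp at this⟩⟩
    exact Continuous.ext_on (dense_compl_singleton (0 : EuclideanSpace ℝ (Fin (m + 1)))) hc1 hc2
      fun ξ hξ => key ξ hξ
  have : W₁.ofRealC = W₂.ofRealC := by
    have h1 : (SchwartzMap.fourierTransformCLE ℝ _) W₁.ofRealC =
        (SchwartzMap.fourierTransformCLE ℝ _) W₂.ofRealC := by
      ext ξ
      exact congrFun keyall ξ
    exact (SchwartzMap.fourierTransformCLE ℝ _).injective h1
  ext x
  have := congrArg (fun f : SchwartzMap (EuclideanSpace ℝ (Fin (m + 1))) ℂ => f x) this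
  simpa using this
end
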